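/- Let (C_i)_{i∈ℕ}, (A_i)_{i∈ℕ}, (B_i)_{i∈ℕ} be inverse systems of abelian groups indexed by the natural numbers, together with morphisms of inverse systems f_i : C_i → A_i and g_i : A_i → B_i such that for every i the sequence C_i → A_i → B_i → 0 is exact (i.e. g_i is surjective and the image of f_i equals the kernel of g_i). Assume: (a) every transition map C_{i+1} → C_i is surjective; and (b) there exist a positive integer M and an integer N such that for all i ≥ N + M the transition map of the inverse system of kernels ker f_i → ker f_{i−M} (the restriction of the composite transition map C_i → C_{i−M}) is the zero homomorphism. Then the induced sequence of inverse limits 0 → lim_i C_i → lim_i A_i → lim_i B_i → 0 is exact; in particular lim_i C_i → lim_i A_i is injective and lim_i A_i → lim_i B_i is surjective. -/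
import Mathlib


/-!
STATEMENT 3. Let `(C_i)`, `(A_i)`, `(B_i)` be inverse systems of abelian groups indexed
by `ℕ` with morphisms of inverse systems `f_i : C_i → A_i`, `g_i : A_i → B_i` such that
each level `C_i → A_i → B_i → 0` is exact.  Assume (a) all transition maps
`C_{i+1} → C_i` are surjective, and (b) there are a positive integer `M` and an integer
`N` such that for all `i ≥ N + M` the transition map `ker f_i → ker f_{i−M}` (the
restriction of the composite transition map `C_i → C_{i−M}`) is zero.  Then the induced
sequence `0 → lim C_i → lim A_i → lim B_i → 0` is exact.

Inverse limits are modelled as compatible sequences.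
-/

/-- The composite transition map `C j →+ C i` (for `i ≤ j`) of an inverse system of
abelian groups with one-step transition maps `cT i : C (i+1) →+ C i`. -/
noncomputable def compTrans {C : ℕ → Type*} [∀ i, AddCommGroup (C i)]
    (cT : ∀ i, C (i + 1) →+ C i) {i j : ℕ} (h : i ≤ j) : C j →+ C i :=
  Nat.leRecOn h (fun {k} (g : C k →+ C i) => g.comp (cT k)) (AddMonoidHom.id (C i))

section CompTransLemmas

variable {C : ℕ → Type*} [∀ i, AddCommGroup (C i)] (cT : ∀ i, C (i + 1) →+ C i)

theorem compTrans_self (i : ℕ) (h : i ≤ i) :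
    compTrans cT h = AddMonoidHom.id (C i) :=
  Nat.leRecOn_self _

theorem compTrans_succ {i j : ℕ} (h : i ≤ j) (h' : i ≤ j + 1) :
    compTrans cT h' = (compTrans cT h).comp (cT j) :=
  Nat.leRecOn_succ h _

theorem compTrans_compat {i j : ℕ} (h : i ≤ j) (x : ∀ i, C i)
    (hx : ∀ i, cT i (x (i + 1)) = x i) : compTrans cT h (x j) = x i := by
  induction j, h using Nat.le_induction with
  | base => rw [compTrans_self cT i le_rfl]; rfl
  | succ j h ih =>
    rw [compTrans_succ cT h (Nat.le_succ_of_le h)]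
    simpa [hx j] using ih

theorem compTrans_trans {i k : ℕ} (h₁ : i ≤ k) :
    ∀ {j : ℕ} (h₂ : k ≤ j) (h₃ : i ≤ j) (x : C j),
      compTrans cT h₃ x = compTrans cT h₁ (compTrans cT h₂ x) := by
  intro j h₂
  induction j, h₂ using Nat.le_induction with
  | base =>
    intro h₃ x
    show compTrans cT h₃ x = compTrans cT h₁ (compTrans cT (le_refl k) x)
    rw [compTrans_self cT k le_rfl]
    rfl
  | succ j h ih =>
    intro h₃ x
    rw [compTrans_succ cT (h₁.trans h) h₃,
      compTrans_succ cT h (Nat.le_succ_of_le h)]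
    exact ih (h₁.trans h) (cT j x)

theorem compTrans_comm {A : ℕ → Type*} [∀ i, AddCommGroup (A i)]
    (aT : ∀ i, A (i + 1) →+ A i) (f : ∀ i, C i →+ A i)
    (hf : ∀ i, (f i).comp (cT i) = (aT i).comp (f (i + 1)))
    {i j : ℕ} (h : i ≤ j) (x : C j) :
    f i (compTrans cT h x) = compTrans aT h (f j x) := by
  induction j, h using Nat.le_induction with
  | base =>
    rw [compTrans_self cT i le_rfl, compTrans_self aT i le_rfl]
    rfl
  | succ j h ih =>
    rw [compTrans_succ cT h (Nat.le_succ_of_le h),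
      compTrans_succ aT h (Nat.le_succ_of_le h)]
    have := DFunLike.congr_fun (hf j) x
    simp only [AddMonoidHom.comp_apply] at this ⊢
    rw [ih (cT j x), this]

end CompTransLemmas

theorem limit_exact_of_surjective_transitions_and_eventually_zero_kernels
    (C A B : ℕ → Type*)
    [∀ i, AddCommGroup (C i)] [∀ i, AddCommGroup (A i)] [∀ i, AddCommGroup (B i)]
    -- transition maps of the three inverse systems
    (cT : ∀ i, C (i + 1) →+ C i) (aT : ∀ i, A (i + 1) →+ A i) (bT : ∀ i, B (i + 1) →+ B i)
    -- morphisms of inverse systems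
    (f : ∀ i, C i →+ A i) (g : ∀ i, A i →+ B i)
    (hf_compat : ∀ i, (f i).comp (cT i) = (aT i).comp (f (i + 1)))
    (hg_compat : ∀ i, (g i).comp (aT i) = (bT i).comp (g (i + 1)))
    -- each level `C_i → A_i → B_i → 0` is exact
    (h_exact : ∀ i, (f i).range = (g i).ker)
    (hg_surj : ∀ i, Function.Surjective (g i))
    -- (a) the transition maps of `C` are surjective
    (hcT_surj : ∀ i, Function.Surjective (cT i))
    -- (b) for `i ≥ N + M`, the restriction of the composite transition map
    -- `C_i → C_{i−M}` to `ker f_i` is zero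
    (M : ℕ) (hM : 0 < M) (N : ℕ)
    (hker_zero : ∀ i, N + M ≤ i → ∀ x : C i, f i x = 0 →
      compTrans cT (Nat.sub_le i M) x = 0) :
    -- exactness at `lim C_i`: the induced map `lim C_i → lim A_i` is injective
    (∀ x : ∀ i, C i, (∀ i, cT i (x (i + 1)) = x i) →
      (∀ i, f i (x i) = 0) → ∀ i, x i = 0) ∧
    -- exactness at `lim A_i`: the kernel of `lim A_i → lim B_i` equals the image of
    -- `lim C_i → lim A_i`
    (∀ a : ∀ i, A i, (∀ i, aT i (a (i + 1)) = a i) →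
      ((∀ i, g i (a i) = 0) ↔
        ∃ x : ∀ i, C i, (∀ i, cT i (x (i + 1)) = x i) ∧ ∀ i, f i (x i) = a i)) ∧
    -- exactness at `lim B_i`: the induced map `lim A_i → lim B_i` is surjective
    (∀ b : ∀ i, B i, (∀ i, bT i (b (i + 1)) = b i) →
      ∃ a : ∀ i, A i, (∀ i, aT i (a (i + 1)) = a i) ∧ ∀ i, g i (a i) = b i) := by
  refine ⟨?_, ?_, ?_⟩
  · -- injectivity at `lim C`
    intro x hx hfx i
    have h₃ : i ≤ N + M + i := by omega
    have h₁ : i ≤ N + M + i - M := by omega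
    have h₂ : N + M + i - M ≤ N + M + i := Nat.sub_le _ _
    have hz : compTrans cT (Nat.sub_le (N + M + i) M) (x (N + M + i)) = 0 :=
      hker_zero (N + M + i) (by omega) _ (hfx _)
    have := compTrans_compat cT h₃ x hx
    rw [compTrans_trans cT h₁ h₂ h₃, hz, map_zero] at this
    exact this.symm
  · -- exactness at `lim A`
    intro a ha
    constructor
    · intro hga
      have hmem : ∀ i, ∃ c : C i, f i c = a i := by
        intro i
        have : a i ∈ (g i).ker := hga i
        rw [← h_exact i] at this
        exact this
      choose c hc using hmem
      refine ⟨fun i => compTrans cT (show i ≤ N + M + i by omega) (c (N + M + i)),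
        ?_, ?_⟩
      · intro i
        set j := N + M + i with hj
        have h1 : i ≤ i + 1 := Nat.le_succ i
        have h2 : i + 1 ≤ j + 1 := by omega
        have h3 : i ≤ j + 1 := by omega
        have h4 : i ≤ j := by omega
        -- `cT i y = compTrans cT h1 y`
        have hstep : ∀ y : C (i + 1), cT i y = compTrans cT h1 y := by
          intro y
          rw [compTrans_succ cT le_rfl h1, AddMonoidHom.comp_apply,
            compTrans_self cT i le_rfl]
          rfl
        rw [hstep]
        show compTrans cT h1 (compTrans cT h2 (c (j + 1))) = compTrans cT h4 (c j)
        rw [← compTrans_trans cT h1 h2 h3,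
          compTrans_succ cT h4 h3, AddMonoidHom.comp_apply]
        -- the element `cT j (c (j+1)) - c j` is in `ker (f j)`
        have hk : f j (cT j (c (j + 1)) - c j) = 0 := by
          have hcomm := DFunLike.congr_fun (hf_compat j) (c (j + 1))
          simp only [AddMonoidHom.comp_apply] at hcomm
          rw [map_sub, hcomm, hc (j + 1), ha j, hc j, sub_self]
        have hkz : compTrans cT (show i ≤ j from h4) (cT j (c (j + 1)) - c j) = 0 := by
          have h5 : i ≤ j - M := by omega
          rw [compTrans_trans cT h5 (Nat.sub_le j M) h4,
            hker_zero j (by omega) _ hk, map_zero]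
        have : cT j (c (j + 1)) = c j + (cT j (c (j + 1)) - c j) := by abel
        rw [this, map_add, hkz, add_zero]
      · intro i
        rw [compTrans_comm cT aT f hf_compat, hc,
          compTrans_compat aT (show i ≤ N + M + i by omega) a ha]
    · rintro ⟨x, hxc, hxf⟩ i
      have : f i (x i) ∈ (g i).ker := by
        rw [← h_exact i]; exact ⟨x i, rfl⟩
      rw [← hxf i]
      exact this
  · -- surjectivity at `lim B`
    intro b hb
    have step : ∀ i (x : A i), g i x = b i →
        ∃ y : A (i + 1), g (i + 1) y = b (i + 1) ∧ aT i y = x := by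
      intro i x hx
      obtain ⟨y₀, hy₀⟩ := hg_surj (i + 1) (b (i + 1))
      have hdiff : g i (aT i y₀ - x) = 0 := by
        have hcomm := DFunLike.congr_fun (hg_compat i) y₀
        simp only [AddMonoidHom.comp_apply] at hcomm
        rw [map_sub, hcomm, hy₀, hb i, hx, sub_self]
      have : aT i y₀ - x ∈ (f i).range := by rw [h_exact i]; exact hdiff
      obtain ⟨d, hd⟩ := this
      obtain ⟨d', hd'⟩ := hcT_surj i d
      refine ⟨y₀ - f (i + 1) d', ?_, ?_⟩
      · have : f (i + 1) d' ∈ (g (i + 1)).ker := by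
          rw [← h_exact (i + 1)]; exact ⟨d', rfl⟩
        rw [map_sub, hy₀, this, sub_zero]
      · have hcomm := DFunLike.congr_fun (hf_compat i) d'
        simp only [AddMonoidHom.comp_apply] at hcomm
        rw [map_sub, ← hcomm, hd', hd]
        abel
    choose st hst1 hst2 using step
    let aux : ∀ i, {x : A i // g i x = b i} := fun i =>
      Nat.rec ⟨Classical.choose (hg_surj 0 (b 0)),
        Classical.choose_spec (hg_surj 0 (b 0))⟩
        (fun n p => ⟨st n p.1 p.2, hst1 n p.1 p.2⟩) i
    refine ⟨fun i => (aux i).1, fun i => ?_, fun i => (aux i).2⟩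
    exact hst2 i (aux i).1 (aux i).2
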